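/- Let k : ℂ → ℂ be entire and suppose there exist a constant C > 0 and a natural number d such that Re (k z) ≤ C * (1 + |z|)^d for all z ∈ ℂ. Then k is a polynomial function of degree at most d; that is, there exists a polynomial P ∈ ℂ[X] with natural degree at most d such that k z = P.eval z for all z ∈ ℂ. -/

import Mathlib

open scoped NNReal
open Complex MeasureTheory intervalIntegral Real Filter Topology Polynomial

noncomputable section
namespace EntirePolyBC

def em (θ : ℝ) : ℂ := Complex.exp (θ * Complex.I)

lemma em_ne_zero (θ : ℝ) : em θ ≠ 0 := Complex.exp_ne_zero _

lemma abs_em (θ : ℝ) : ‖em θ‖ = 1 := by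
  simp [em, Complex.norm_exp]

lemma circleMap_zero_eq (R θ : ℝ) : circleMap 0 R θ = (R : ℂ) * em θ := by
  simp [circleMap, em]

lemma conj_em (θ : ℝ) : (starRingEnd ℂ) (em θ) = (em θ)⁻¹ := by
  rw [em, ← Complex.exp_conj, ← Complex.exp_neg]
  congr 1
  simp

lemma continuous_em : Continuous em :=
  Complex.continuous_exp.comp (Complex.continuous_ofReal.mul continuous_const)

/-- Coefficient formula as interval integral. -/
lemma coeff_formula (f : ℂ → ℂ) {R : ℝ} (hR : 0 < R) (n : ℕ) :
    (2 * π * (R : ℂ) ^ n) * (cauchyPowerSeries f 0 R).coeff n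
      = ∫ θ in (0:ℝ)..(2*π), (em θ)⁻¹ ^ n * f (circleMap 0 R θ) := by
  have h1 : (cauchyPowerSeries f 0 R).coeff n
      = (2 * π * Complex.I)⁻¹ • ∮ z in C(0, R), (1 / (z - 0)) ^ n • (z - 0)⁻¹ • f z := by
    rw [FormalMultilinearSeries.coeff]
    simpa using cauchyPowerSeries_apply f 0 R n 1
  rw [h1, circleIntegral]
  have key : ∀ θ : ℝ,
      deriv (circleMap 0 R) θ • ((1 / (circleMap 0 R θ - 0)) ^ n
        • (circleMap 0 R θ - 0)⁻¹ • f (circleMap 0 R θ))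
      = Complex.I * ((R : ℂ)⁻¹ ^ n * ((em θ)⁻¹ ^ n * f (circleMap 0 R θ))) := by
    intro θ
    rw [deriv_circleMap, circleMap_zero_eq, smul_eq_mul, smul_eq_mul, smul_eq_mul]
    have hR0 : (R : ℂ) ≠ 0 := by exact_mod_cast hR.ne'
    field_simp [em_ne_zero θ]
    ring
  rw [intervalIntegral.integral_congr (fun θ _ => key θ)]
  rw [intervalIntegral.integral_const_mul, intervalIntegral.integral_const_mul]
  have hπ : (π : ℂ) ≠ 0 := by exact_mod_cast Real.pi_ne_zero
  have hR0 : (R : ℂ) ≠ 0 := by exact_mod_cast hR.ne'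
  rw [smul_eq_mul]
  field_simp
  ring
  rw [← mul_pow, mul_inv_cancel₀ hR0, one_pow, one_mul]

lemma intervalIntegral_conj (f : ℝ → ℂ) {a b : ℝ} :
    ∫ x in a..b, (starRingEnd ℂ) (f x) = (starRingEnd ℂ) (∫ x in a..b, f x) := by
  rw [intervalIntegral.intervalIntegral_eq_integral_uIoc,
    intervalIntegral.intervalIntegral_eq_integral_uIoc, integral_conj]
  split_ifs <;> simp

lemma vanish (f : ℂ → ℂ) (hf : Differentiable ℂ f) {R : ℝ} (hR : 0 < R) {n : ℕ} (hn : 1 ≤ n) :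
    ∫ θ in (0:ℝ)..(2*π), (em θ) ^ n * f (circleMap 0 R θ) = 0 := by
  obtain ⟨m, rfl⟩ : ∃ m, n = m + 1 := ⟨n - 1, (Nat.succ_pred_eq_of_pos hn).symm⟩
  have h0 : (∮ z in C(0, R), z ^ m * f z) = 0 := by
    apply circleIntegral_eq_zero_of_differentiable_on_off_countable hR.le Set.countable_empty
    · exact ((continuous_pow m).mul hf.continuous).continuousOn
    · intro z _
      exact ((differentiable_pow m).mul hf).differentiableAt
  rw [circleIntegral] at h0
  have key : ∀ θ : ℝ,
      deriv (circleMap 0 R) θ • (circleMap 0 R θ ^ m * f (circleMap 0 R θ))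
      = Complex.I * ((R : ℂ) ^ (m + 1) * ((em θ) ^ (m + 1) * f (circleMap 0 R θ))) := by
    intro θ
    rw [deriv_circleMap, circleMap_zero_eq, smul_eq_mul]
    ring
  rw [intervalIntegral.integral_congr (fun θ _ => key θ),
    intervalIntegral.integral_const_mul, intervalIntegral.integral_const_mul] at h0
  have hR0 : (R : ℂ) ≠ 0 := by exact_mod_cast hR.ne'
  simpa [Complex.I_ne_zero, pow_ne_zero, hR0] using h0

lemma vanish_conj (f : ℂ → ℂ) (hf : Differentiable ℂ f) {R : ℝ} (hR : 0 < R) {n : ℕ}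
    (hn : 1 ≤ n) :
    ∫ θ in (0:ℝ)..(2*π), (em θ)⁻¹ ^ n * (starRingEnd ℂ) (f (circleMap 0 R θ)) = 0 := by
  have h := congrArg (starRingEnd ℂ) (vanish f hf hR hn)
  rw [← intervalIntegral_conj] at h
  simpa only [map_mul, map_pow, conj_em, map_zero] using h

lemma int_em_inv_pow {n : ℕ} (hn : 1 ≤ n) :
    ∫ θ in (0:ℝ)..(2*π), (em θ)⁻¹ ^ n = 0 := by
  have key : ∀ θ : ℝ, (em θ)⁻¹ ^ n = Complex.exp ((-(n : ℂ) * Complex.I) * (θ : ℝ)) := by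
    intro θ
    rw [em, ← Complex.exp_neg, ← Complex.exp_nat_mul]
    congr 1
    push_cast
    ring
  have hc : (-(n : ℂ) * Complex.I) ≠ 0 := by
    simp [Complex.I_ne_zero]
    exact_mod_cast Nat.pos_of_ne_zero (by omega) |>.ne'
  rw [intervalIntegral.integral_congr (fun θ _ => key θ), integral_exp_mul_complex hc]
  have : Complex.exp (-(n : ℂ) * Complex.I * (2 * π)) = 1 := by
    have := Complex.exp_int_mul_two_pi_mul_I (-(n : ℤ))
    rw [← this]
    congr 1
    push_cast
    ring
  rw [show ((2*π : ℝ) : ℂ) = 2 * (π:ℂ) by push_cast; ring, this]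
  simp

lemma coeff_zero_eq (f : ℂ → ℂ) (hf : Differentiable ℂ f) {R : ℝ≥0} (hR : 0 < R) :
    (cauchyPowerSeries f 0 R).coeff 0 = f 0 := by
  have h := (hf.hasFPowerSeriesOnBall 0 hR).coeff_zero (fun _ => 1)
  rw [FormalMultilinearSeries.coeff]
  exact h

lemma mean_re (f : ℂ → ℂ) (hf : Differentiable ℂ f) {R : ℝ≥0} (hR : 0 < R) :
    ∫ θ in (0:ℝ)..(2*π), (f (circleMap 0 R θ)).re = 2 * π * (f 0).re := by
  have h := coeff_formula f (R := R) (by exact_mod_cast hR) 0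
  rw [coeff_zero_eq f hf hR] at h
  simp only [pow_zero, inv_one, one_pow, one_mul, mul_one] at h
  have hFc : Continuous fun θ : ℝ => f (circleMap 0 R θ) :=
    hf.continuous.comp (continuous_circleMap 0 R)
  have hint : IntervalIntegrable (fun θ : ℝ => f (circleMap 0 R θ)) volume 0 (2*π) :=
    hFc.intervalIntegrable _ _
  have := Complex.reCLM.intervalIntegral_comp_comm hint
  rw [← h] at this
  simpa using this

lemma coeff_bound (f : ℂ → ℂ) (hf : Differentiable ℂ f) {R : ℝ≥0} (hR : 0 < (R:ℝ)) {M : ℝ}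
    (hM : ∀ θ : ℝ, (f (circleMap 0 (R:ℝ) θ)).re ≤ M) {n : ℕ} (hn : 1 ≤ n) :
    ‖(cauchyPowerSeries f 0 (R:ℝ)).coeff n‖ ≤ 2 * (M - (f 0).re) / (R:ℝ) ^ n := by
  set u : ℝ → ℂ := fun θ => (em θ)⁻¹ ^ n with hu
  set F : ℝ → ℂ := fun θ => f (circleMap 0 R θ) with hF
  have hFc : Continuous F := hf.continuous.comp (continuous_circleMap 0 R)
  have huc : Continuous u := ((continuous_em.inv₀ em_ne_zero)).pow n
  have huF : IntervalIntegrable (fun θ => u θ * F θ) volume 0 (2*π) :=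
    (huc.mul hFc).intervalIntegrable _ _
  have huFc : IntervalIntegrable (fun θ => u θ * (starRingEnd ℂ) (F θ)) volume 0 (2*π) :=
    (huc.mul (Complex.continuous_conj.comp hFc)).intervalIntegrable _ _
  have huI : IntervalIntegrable u volume 0 (2*π) := huc.intervalIntegrable _ _
  -- key identity
  have key : (2 * π * (R : ℂ) ^ n) * (cauchyPowerSeries f 0 (R:ℝ)).coeff n
      = ∫ θ in (0:ℝ)..(2*π), u θ * (2 * ((F θ).re : ℂ) - 2 * M) := by
    have hpt : ∀ θ : ℝ, u θ * (2 * ((F θ).re : ℂ) - 2 * M)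
        = u θ * F θ + u θ * (starRingEnd ℂ) (F θ) - (2 * (M:ℂ)) * u θ := by
      intro θ
      have hc := Complex.add_conj (F θ)
      push_cast at hc ⊢
      linear_combination (-(u θ)) * hc
    rw [intervalIntegral.integral_congr (fun θ _ => hpt θ),
      intervalIntegral.integral_sub (huF.add huFc) ((huI.const_mul _)),
      intervalIntegral.integral_add huF huFc,
      intervalIntegral.integral_const_mul,
      vanish_conj f hf hR hn, int_em_inv_pow hn, coeff_formula f hR n]
    simp [hu, hF, inv_pow]
  -- norm bound
  have habs : ‖(2 * π * (R : ℂ) ^ n) * (cauchyPowerSeries f 0 (R:ℝ)).coeff n‖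
      ≤ ∫ θ in (0:ℝ)..(2*π), (2*M - 2*(F θ).re) := by
    rw [key]
    have h1 : ‖∫ θ in (0:ℝ)..(2*π), u θ * (2 * ((F θ).re : ℂ) - 2 * M)‖
        ≤ ∫ θ in (0:ℝ)..(2*π), ‖u θ * (2 * ((F θ).re : ℂ) - 2 * M)‖ :=
      intervalIntegral.norm_integral_le_integral_norm (by positivity)
    refine le_trans h1 (le_of_eq (intervalIntegral.integral_congr fun θ _ => ?_))
    have h2 : ‖u θ‖ = 1 := by
      simp [hu, map_pow, abs_em]
    rw [norm_mul, h2, one_mul]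
    have h3 : (2 * ((F θ).re : ℂ) - 2 * M) = ((2 * (F θ).re - 2 * M : ℝ) : ℂ) := by
      push_cast; ring
    rw [h3, Complex.norm_real, Real.norm_eq_abs, abs_of_nonpos (by nlinarith [hM θ])]
    ring
  -- compute the RHS integral
  have hIre : IntervalIntegrable (fun θ => (F θ).re) volume 0 (2*π) :=
    (Complex.continuous_re.comp hFc).intervalIntegrable _ _
  have hrhs : (∫ θ in (0:ℝ)..(2*π), (2*M - 2*(F θ).re))
      = 2 * (2*π) * (M - (f 0).re) := by
    rw [intervalIntegral.integral_sub (intervalIntegrable_const) (hIre.const_mul _),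
      intervalIntegral.integral_const_mul, intervalIntegral.integral_const_mul,
      mean_re f hf (R := R) (by exact_mod_cast hR), intervalIntegral.integral_const]
    simp
    ring
  rw [hrhs] at habs
  have hRn : (0:ℝ) < (R:ℝ)^n := by positivity
  have hfin : ‖(2 * π * (R : ℂ) ^ n) * (cauchyPowerSeries f 0 (R:ℝ)).coeff n‖
      = (2 * π * (R:ℝ)^n) * ‖(cauchyPowerSeries f 0 (R:ℝ)).coeff n‖ := by
    rw [norm_mul]
    congr 1
    rw [show (2 * (π:ℂ) * (R : ℂ) ^ n) = (((2 * π * (R:ℝ)^n : ℝ)) : ℂ) by push_cast; ring,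
      Complex.norm_real, Real.norm_eq_abs, abs_of_pos (by have := Real.pi_pos; have := pow_pos hR n; positivity)]
  rw [hfin] at habs
  have hpos : (0:ℝ) < 2*π*(R:ℝ)^n := by have := Real.pi_pos; have := pow_pos hR n; positivity
  rw [div_eq_inv_mul, ← mul_le_mul_iff_right₀ hpos]
  calc 2*π*(R:ℝ)^n * ‖_‖ ≤ 2 * (2*π) * (M - (f 0).re) := habs
    _ = 2*π*(R:ℝ)^n * (((R:ℝ)^n)⁻¹ * (2 * (M - (f 0).re))) := by
        field_simp
theorem main
    (k : ℂ → ℂ) (hk : Differentiable ℂ k) (C : ℝ) (hC : 0 < C) (d : ℕ)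
    (hb : ∀ z : ℂ, (k z).re ≤ C * (1 + ‖z‖) ^ d) :
    ∃ P : Polynomial ℂ, P.natDegree ≤ d ∧ ∀ z : ℂ, k z = P.eval z := by
  set p := cauchyPowerSeries k 0 ((1:ℝ≥0):ℝ) with hp
  have hps : HasFPowerSeriesOnBall k p 0 ⊤ := hk.hasFPowerSeriesOnBall 0 one_pos
  set a : ℕ → ℂ := fun n => p.coeff n with ha
  -- coefficients vanish beyond d
  have hzero : ∀ n, d < n → a n = 0 := by
    intro n hdn
    set K : ℝ := 2 * C * 2 ^ d + 2 * |(k 0).re| + 2 with hK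
    have hbound : ∀ r : ℝ, 1 ≤ r → ‖a n‖ ≤ K / r := by
      intro r hr
      have hr0 : 0 < r := lt_of_lt_of_le one_pos hr
      set R : ℝ≥0 := Real.toNNReal r with hR
      have hRr : (R : ℝ) = r := Real.coe_toNNReal r hr0.le
      have hRpos : 0 < (R : ℝ) := by rw [hRr]; exact hr0
      have hM : ∀ θ : ℝ, (k (circleMap 0 (R:ℝ) θ)).re ≤ C * (1 + r) ^ d := by
        intro θ
        rw [hRr]
        have h1 := hb (circleMap 0 r θ)
        rwa [norm_circleMap_zero, abs_of_pos hr0] at h1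
      have h2 := coeff_bound k hk hRpos hM (n := n) (by omega)
      have heq : cauchyPowerSeries k 0 (R:ℝ) = p := by
        exact (hk.hasFPowerSeriesOnBall 0 (by exact_mod_cast hRpos)).hasFPowerSeriesAt.eq_formalMultilinearSeries
          (hk.hasFPowerSeriesOnBall 0 one_pos).hasFPowerSeriesAt
      rw [heq, hRr] at h2
      refine h2.trans ?_
      rw [div_le_div_iff₀ (by positivity) hr0]
      have h3 : (1 + r) ^ d ≤ 2 ^ d * r ^ d := by
        calc (1 + r) ^ d ≤ (2 * r) ^ d := by
              apply pow_le_pow_left₀ (by linarith) (by linarith)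
          _ = 2 ^ d * r ^ d := mul_pow 2 r d
      have h4 : r ^ (d + 1) ≤ r ^ n := pow_le_pow_right₀ hr (by omega)
      have h5 : r ^ d * r = r ^ (d+1) := (pow_succ r d).symm
      have hrd : (0:ℝ) < r ^ d := by positivity
      have hre : -(k 0).re ≤ |(k 0).re| := neg_le_abs _
      calc 2 * (C * (1 + r) ^ d - (k 0).re) * r
          ≤ 2 * (C * (2^d * r^d) + |(k 0).re| * r^d) * r := by
            have e1 : C * (1 + r) ^ d ≤ C * (2 ^ d * r ^ d) :=
              mul_le_mul_of_nonneg_left h3 hC.le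
            have e2 : |(k 0).re| * 1 ≤ |(k 0).re| * r ^ d :=
              mul_le_mul_of_nonneg_left (one_le_pow₀ hr (n := d)) (abs_nonneg _)
            nlinarith [hr0, hre, e1, e2]
        _ = (2 * C * 2^d + 2 * |(k 0).re|) * (r^d * r) := by ring
        _ ≤ K * r^(d+1) := by
            rw [h5]
            apply mul_le_mul_of_nonneg_right _ (by positivity)
            rw [hK]; linarith
        _ ≤ K * r^n := by
            apply mul_le_mul_of_nonneg_left h4
            rw [hK]; positivity
    have htend : Tendsto (fun r : ℝ => K / r) atTop (𝓝 0) :=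
      tendsto_const_nhds.div_atTop tendsto_id
    have hle : ‖a n‖ ≤ 0 :=
      ge_of_tendsto htend (eventually_atTop.2 ⟨1, hbound⟩)
    exact norm_le_zero_iff.mp hle
  -- k equals the polynomial with coefficients a 0, ..., a d
  refine ⟨∑ m ∈ Finset.range (d+1), Polynomial.C (a m) * Polynomial.X ^ m, ?_, ?_⟩
  · apply Polynomial.natDegree_sum_le_of_forall_le
    intro m hm
    exact (Polynomial.natDegree_C_mul_X_pow_le _ _).trans (by
      simp only [Finset.mem_range] at hm; omega)
  · intro z
    have hsum := hps.hasSum (by simp : z ∈ Metric.eball (0:ℂ) ⊤)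
    simp only [FormalMultilinearSeries.apply_eq_pow_smul_coeff, smul_eq_mul, zero_add] at hsum
    have hfin : HasSum (fun n => z ^ n * a n)
        (∑ m ∈ Finset.range (d+1), z ^ m * a m) := by
      apply hasSum_sum_of_ne_finset_zero
      intro m hm
      have : a m = 0 := hzero m (by simpa using hm)
      simp [this]
    rw [hsum.unique hfin]
    simp [Polynomial.eval_finset_sum]
    exact Finset.sum_congr rfl fun m _ => mul_comm _ _

end EntirePolyBC
end



/-- Borel–Carathéodory-type statement: an entire function whose real part is
bounded above by `C * (1 + |z|) ^ d` is a polynomial of degree at most `d`. -/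
theorem entire_with_poly_re_bound_is_poly
    (k : ℂ → ℂ) (hk : Differentiable ℂ k) (C : ℝ) (hC : 0 < C) (d : ℕ)
    (hb : ∀ z : ℂ, (k z).re ≤ C * (1 + ‖z‖) ^ d) :
    ∃ P : Polynomial ℂ, P.natDegree ≤ d ∧ ∀ z : ℂ, k z = P.eval z :=
  EntirePolyBC.main k hk C hC d hb
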